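/- Let 0 < α < n and Ω ∈ L^∞(S^{n-1}) homogeneous of degree zero. Then for any cube Q₁ with side length ρ, any h ∈ ℝⁿ with |h| ≥ 4√n, any x ∈ Q₁ + ρh, and the function φ with |φ| ≤ 2χ_{Q₁} and ∫φ = 0, one has |∫_{Q₁} Ω(x-y)|x-y|^{α-n} φ(y) dy| ≤ C ρ^α |h|^{α-n} ( |h|^{-1} + ρ^{-n} ∫_{Q₁} |Ω(x-y) - Ω(x - ρ y₀)| dy ), where ρy₀ is the center of Q₁ and C depends only on n, α, ‖Ω‖_∞. -/

import Mathlib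

open MeasureTheory
open scoped ENNReal NNReal

def cubeC (n : ℕ) (a : EuclideanSpace ℝ (Fin n)) (r : ℝ) : Set (EuclideanSpace ℝ (Fin n)) :=
  {x | ∀ i, |x i - a i| ≤ r / 2}

lemma cubeC_eq (n : ℕ) (a : EuclideanSpace ℝ (Fin n)) (r : ℝ) :
    cubeC n a r = (MeasurableEquiv.toLp 2 (Fin n → ℝ)).symm ⁻¹'
      (Set.univ.pi fun i => Set.Icc (a i - r / 2) (a i + r / 2)) := by
  ext x
  simp only [cubeC, Set.mem_setOf_eq, Set.mem_preimage, Set.mem_pi, Set.mem_univ, true_implies,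
    Set.mem_Icc]
  have hxi : ∀ i, (MeasurableEquiv.toLp 2 (Fin n → ℝ)).symm x i = x i := fun _ => rfl
  refine forall_congr' fun i => ?_
  rw [hxi, abs_le]
  constructor <;> intro hi <;> constructor <;> linarith [hi.1, hi.2]

lemma measurableSet_cubeC (n : ℕ) (a : EuclideanSpace ℝ (Fin n)) (r : ℝ) :
    MeasurableSet (cubeC n a r) := by
  rw [cubeC_eq]
  exact (MeasurableEquiv.toLp 2 (Fin n → ℝ)).symm.measurable
    (MeasurableSet.univ_pi fun i => measurableSet_Icc)

lemma volume_cubeC (n : ℕ) (a : EuclideanSpace ℝ (Fin n)) (r : ℝ) :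
    volume (cubeC n a r) = ENNReal.ofReal r ^ n := by
  rw [cubeC_eq,
    (EuclideanSpace.volume_preserving_symm_measurableEquiv_toLp (Fin n)).measure_preimage
      ((MeasurableSet.univ_pi fun i => measurableSet_Icc)).nullMeasurableSet,
    volume_pi_pi]
  have hsub : ∀ i : Fin n, a i + r / 2 - (a i - r / 2) = r := fun i => by ring
  simp [Real.volume_Icc, hsub]

lemma norm_sub_le_of_mem_cubeC {n : ℕ} {a x : EuclideanSpace ℝ (Fin n)} {r : ℝ} (hr : 0 ≤ r)
    (hx : x ∈ cubeC n a r) : ‖x - a‖ ≤ Real.sqrt n * r / 2 := by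
  have h1 : ‖x - a‖ = Real.sqrt (∑ i, (x i - a i) ^ 2) := by
    rw [EuclideanSpace.norm_eq]
    congr 1
    refine Finset.sum_congr rfl fun i _ => ?_
    simp [sq_abs]
  rw [h1]
  have h2 : (∑ i, (x i - a i) ^ 2) ≤ (n : ℝ) * (r / 2) ^ 2 := by
    calc ∑ i, (x i - a i) ^ 2 ≤ ∑ _i : Fin n, (r / 2) ^ 2 := by
          refine Finset.sum_le_sum fun i _ => ?_
          rw [← sq_abs]
          exact pow_le_pow_left₀ (abs_nonneg _) (hx i) 2
      _ = (n : ℝ) * (r / 2) ^ 2 := by simp [Finset.sum_const]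
  calc Real.sqrt (∑ i, (x i - a i) ^ 2) ≤ Real.sqrt ((n : ℝ) * (r / 2) ^ 2) :=
        Real.sqrt_le_sqrt h2
    _ = Real.sqrt n * (r / 2) := by
        rw [Real.sqrt_mul (by positivity), Real.sqrt_sq (by positivity)]
    _ = Real.sqrt n * r / 2 := by ring

lemma rpow_diff_le {β m a b : ℝ} (hβ : β < 0) (hm : 0 < m) (ha : m ≤ a) (hb : m ≤ b) :
    |a ^ β - b ^ β| ≤ |β| * m ^ (β - 1) * |a - b| := by
  have key : ∀ t ∈ Set.Ici m, HasDerivWithinAt (fun s : ℝ => s ^ β)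
      (β * t ^ (β - 1)) (Set.Ici m) t := fun t ht =>
    (Real.hasDerivAt_rpow_const (Or.inl (hm.trans_le ht).ne')).hasDerivWithinAt
  have bound : ∀ t ∈ Set.Ici m, ‖β * t ^ (β - 1)‖ ≤ |β| * m ^ (β - 1) := by
    intro t ht
    rw [norm_mul, Real.norm_eq_abs, Real.norm_eq_abs,
      abs_of_nonneg (Real.rpow_nonneg (le_trans hm.le ht) _)]
    exact mul_le_mul_of_nonneg_left
      (Real.rpow_le_rpow_of_nonpos hm ht (by linarith)) (abs_nonneg β)
  have := (convex_Ici m).norm_image_sub_le_of_norm_hasDerivWithin_le key bound hb ha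
  simpa [Real.norm_eq_abs, abs_sub_comm] using this

set_option maxHeartbeats 1000000 in
/-- Let `0 < α < n`, `Ω ∈ L^∞(S^{n-1})` homogeneous of degree zero.  For any cube `Q₁`
of side `ρ` and center `ρy₀`, any `h` with `|h| ≥ 4√n`, any `x ∈ Q₁ + ρh`, and any `φ`
with `|φ| ≤ 2χ_{Q₁}` and `∫ φ = 0`:
`|∫_{Q₁} Ω(x-y)|x-y|^{α-n} φ(y) dy| ≤ C ρ^α |h|^{α-n} (|h|⁻¹ + ρ^{-n} ∫_{Q₁} |Ω(x-y) - Ω(x-ρy₀)| dy)`,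
with `C` depending only on `n, α, ‖Ω‖_∞`. -/
theorem stmt_17 {n : ℕ} (hn : 0 < n) (α M : ℝ)
    (hα0 : 0 < α) (hαn : α < n) (hM : 0 ≤ M) :
    ∃ C : ℝ, 0 < C ∧
      ∀ (Ω : EuclideanSpace ℝ (Fin n) → ℝ), Measurable Ω →
        (∀ t : ℝ, 0 < t → ∀ x : EuclideanSpace ℝ (Fin n), x ≠ 0 → Ω (t • x) = Ω x) →
        (∀ x : EuclideanSpace ℝ (Fin n), x ≠ 0 → |Ω x| ≤ M) →
        ∀ (c₀ h : EuclideanSpace ℝ (Fin n)) (ρ : ℝ) (φ : EuclideanSpace ℝ (Fin n) → ℝ),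
          0 < ρ → 4 * Real.sqrt n ≤ ‖h‖ →
          Measurable φ →
          (∀ x, |φ x| ≤ 2 * Set.indicator (cubeC n c₀ ρ) (fun _ => (1 : ℝ)) x) →
          (∫ x, φ x) = 0 →
          ∀ x ∈ cubeC n (c₀ + ρ • h) ρ,
            |∫ y in cubeC n c₀ ρ, Ω (x - y) * ‖x - y‖ ^ (α - (n : ℝ)) * φ y| ≤
              C * ρ ^ α * ‖h‖ ^ (α - (n : ℝ)) *
                (‖h‖⁻¹ + ρ ^ (-(n : ℝ)) *
                  ∫ y in cubeC n c₀ ρ, |Ω (x - y) - Ω (x - c₀)|) := by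
  have hs1 : (1 : ℝ) ≤ Real.sqrt n := by
    calc (1 : ℝ) = Real.sqrt 1 := by simp
      _ ≤ Real.sqrt n := Real.sqrt_le_sqrt (by exact_mod_cast hn)
  set s : ℝ := Real.sqrt n with hsdef
  have hs0 : 0 < s := lt_of_lt_of_le one_pos hs1
  set β : ℝ := α - n with hβdef
  have hβneg : β < 0 := by rw [hβdef]; linarith
  set C : ℝ := (M + 2) * ((n : ℝ) + 1) * s * (4 / 3 : ℝ) ^ (n + 1) with hCdef
  have hC : 0 < C := by
    have h1 : (0 : ℝ) < M + 2 := by linarith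
    have h2 : (0 : ℝ) < (n : ℝ) + 1 := by positivity
    have h3 : (0 : ℝ) < (4 / 3 : ℝ) ^ (n + 1) := by positivity
    positivity
  refine ⟨C, hC, ?_⟩
  intro Ω hΩm hΩhom hΩbd c₀ h ρ φ hρ hh hφm hφbd hφint x hx
  clear hΩhom
  set Q : Set (EuclideanSpace ℝ (Fin n)) := cubeC n c₀ ρ with hQdef
  have hhpos : 0 < ‖h‖ := lt_of_lt_of_le (by positivity) hh
  have hsh : s * ρ / 2 ≤ ρ * ‖h‖ / 8 := by nlinarith
  have hxh : ‖x - (c₀ + ρ • h)‖ ≤ s * ρ / 2 := norm_sub_le_of_mem_cubeC hρ.le hx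
  set m : ℝ := 3 / 4 * (ρ * ‖h‖) with hmdef
  have hm : 0 < m := by positivity
  have hρh : ‖ρ • h‖ = ρ * ‖h‖ := by
    rw [norm_smul, Real.norm_eq_abs, abs_of_pos hρ]
  have hxc : m ≤ ‖x - c₀‖ := by
    have e1 : ρ • h = (x - c₀) - (x - (c₀ + ρ • h)) := by abel
    have := norm_sub_le (x - c₀) (x - (c₀ + ρ • h))
    rw [← e1, hρh] at this
    nlinarith
  have hxc0 : x - c₀ ≠ 0 := by
    intro h0
    rw [h0, norm_zero] at hxc
    exact absurd hxc (not_le.mpr hm)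
  have hxy : ∀ y ∈ Q, m ≤ ‖x - y‖ := by
    intro y hy
    have hyc : ‖y - c₀‖ ≤ s * ρ / 2 := norm_sub_le_of_mem_cubeC hρ.le hy
    have e1 : ρ • h = (x - y) - (x - (c₀ + ρ • h)) - (c₀ - y) := by abel
    have t1 := norm_sub_le ((x - y) - (x - (c₀ + ρ • h))) (c₀ - y)
    have t2 := norm_sub_le (x - y) (x - (c₀ + ρ • h))
    rw [← e1, hρh] at t1
    have hyc' : ‖c₀ - y‖ ≤ s * ρ / 2 := by rwa [norm_sub_rev]
    nlinarith
  have hxy0 : ∀ y ∈ Q, x - y ≠ 0 := by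
    intro y hy h0
    have := hxy y hy
    rw [h0, norm_zero] at this
    exact absurd this (not_le.mpr hm)
  -- φ facts
  have hφ2 : ∀ y, |φ y| ≤ 2 := by
    intro y
    refine (hφbd y).trans ?_
    have : Set.indicator Q (fun _ => (1 : ℝ)) y ≤ 1 := by
      classical
      rw [Set.indicator]
      split <;> norm_num
    linarith
  have hφ0 : ∀ y, y ∉ Q → φ y = 0 := by
    intro y hy
    have := hφbd y
    rw [Set.indicator_of_notMem hy] at this
    simpa [abs_nonpos_iff] using this
  have hintQ : ∫ y in Q, φ y = 0 := by
    rw [setIntegral_eq_integral_of_forall_compl_eq_zero hφ0]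
    exact hφint
  -- measure facts
  have hQm : MeasurableSet Q := measurableSet_cubeC n c₀ ρ
  have hQfin : volume Q < ∞ := by
    rw [hQdef, volume_cubeC]
    exact ENNReal.pow_lt_top ENNReal.ofReal_lt_top
  have hQtoReal : (volume Q).toReal = ρ ^ n := by
    rw [hQdef, volume_cubeC]
    rw [ENNReal.toReal_pow, ENNReal.toReal_ofReal hρ.le]
  -- bounded integrability helper
  have bdd_int : ∀ (g : EuclideanSpace ℝ (Fin n) → ℝ) (K : ℝ), Measurable g →
      (∀ y ∈ Q, |g y| ≤ K) → IntegrableOn g Q := by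
    intro g K hg hK
    refine Integrable.mono' (g := fun _ => K) (integrableOn_const hQfin.ne)
      hg.aestronglyMeasurable ?_
    rw [ae_restrict_iff' hQm]
    exact ae_of_all _ fun y hy => by simpa [Real.norm_eq_abs] using hK y hy
  -- the three pieces
  set g1 : EuclideanSpace ℝ (Fin n) → ℝ :=
    fun y => Ω (x - y) * (‖x - y‖ ^ β - ‖x - c₀‖ ^ β) * φ y with hg1def
  set g2 : EuclideanSpace ℝ (Fin n) → ℝ :=
    fun y => (Ω (x - y) - Ω (x - c₀)) * ‖x - c₀‖ ^ β * φ y with hg2def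
  set g3 : EuclideanSpace ℝ (Fin n) → ℝ :=
    fun y => Ω (x - c₀) * ‖x - c₀‖ ^ β * φ y with hg3def
  have hsplit : ∀ y, Ω (x - y) * ‖x - y‖ ^ β * φ y = g1 y + g2 y + g3 y := by
    intro y; rw [hg1def, hg2def, hg3def]; ring
  set K1 : ℝ := 2 * (M * (((n : ℝ) - α) * m ^ (β - 1) * (s * ρ / 2))) with hK1def
  have hg1bd : ∀ y ∈ Q, |g1 y| ≤ K1 := by
    intro y hy
    have h1 : |Ω (x - y)| ≤ M := hΩbd _ (hxy0 y hy)
    have h2 : |‖x - y‖ ^ β - ‖x - c₀‖ ^ β| ≤ ((n : ℝ) - α) * m ^ (β - 1) * (s * ρ / 2) := by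
      have := rpow_diff_le hβneg hm (hxy y hy) hxc
      have habs : |β| = (n : ℝ) - α := by rw [hβdef, abs_of_neg hβneg]; ring
      have hdist : |‖x - y‖ - ‖x - c₀‖| ≤ s * ρ / 2 := by
        have e1 : (x - y) - (x - c₀) = c₀ - y := by abel
        have := abs_norm_sub_norm_le (x - y) (x - c₀)
        rw [e1] at this
        exact this.trans (le_of_eq_of_le (norm_sub_rev c₀ y) (norm_sub_le_of_mem_cubeC hρ.le hy))
      calc |‖x - y‖ ^ β - ‖x - c₀‖ ^ β| ≤ |β| * m ^ (β - 1) * |‖x - y‖ - ‖x - c₀‖| := this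
        _ ≤ |β| * m ^ (β - 1) * (s * ρ / 2) :=
            mul_le_mul_of_nonneg_left hdist (by positivity)
        _ = ((n : ℝ) - α) * m ^ (β - 1) * (s * ρ / 2) := by rw [habs]
    calc |g1 y| = |Ω (x - y)| * |‖x - y‖ ^ β - ‖x - c₀‖ ^ β| * |φ y| := by
          rw [hg1def]; simp [abs_mul]
      _ ≤ M * (((n : ℝ) - α) * m ^ (β - 1) * (s * ρ / 2)) * 2 := by
          have hn1 : (0:ℝ) ≤ (n:ℝ) - α := by linarith
          have h3 : 0 ≤ M * (((n : ℝ) - α) * m ^ (β - 1) * (s * ρ / 2)) := by positivity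
          exact mul_le_mul (mul_le_mul h1 h2 (abs_nonneg _) hM) (hφ2 y) (abs_nonneg _) h3
      _ = K1 := by rw [hK1def]; ring
  have hg2bd : ∀ y ∈ Q, |g2 y| ≤ 2 * m ^ β * |Ω (x - y) - Ω (x - c₀)| := by
    intro y hy
    have hB : ‖x - c₀‖ ^ β ≤ m ^ β := Real.rpow_le_rpow_of_nonpos hm hxc hβneg.le
    calc |g2 y| = |Ω (x - y) - Ω (x - c₀)| * |‖x - c₀‖ ^ β| * |φ y| := by
          rw [hg2def]; simp [abs_mul]
      _ = |Ω (x - y) - Ω (x - c₀)| * (‖x - c₀‖ ^ β) * |φ y| := by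
          rw [abs_of_nonneg (Real.rpow_nonneg (norm_nonneg _) _)]
      _ ≤ |Ω (x - y) - Ω (x - c₀)| * m ^ β * 2 := by
          have h3 : 0 ≤ |Ω (x - y) - Ω (x - c₀)| * m ^ β := by positivity
          exact mul_le_mul (mul_le_mul_of_nonneg_left hB (abs_nonneg _)) (hφ2 y) (abs_nonneg _) h3
      _ = 2 * m ^ β * |Ω (x - y) - Ω (x - c₀)| := by ring
  -- measurability
  have hmeas1 : Measurable g1 := by rw [hg1def]; fun_prop
  have hmeas2 : Measurable g2 := by rw [hg2def]; fun_prop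
  have hmeas3 : Measurable g3 := by rw [hg3def]; fun_prop
  have hg2bd' : ∀ y ∈ Q, |g2 y| ≤ 2 * m ^ β * (2 * M) := by
    intro y hy
    refine (hg2bd y hy).trans ?_
    have : |Ω (x - y) - Ω (x - c₀)| ≤ 2 * M := by
      have h1 := hΩbd _ (hxy0 y hy)
      have h2 := hΩbd _ hxc0
      calc |Ω (x - y) - Ω (x - c₀)| ≤ |Ω (x - y)| + |Ω (x - c₀)| := abs_sub _ _
        _ ≤ 2 * M := by linarith
    have hmp : (0:ℝ) ≤ 2 * m ^ β := by positivity
    exact mul_le_mul_of_nonneg_left this hmp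
  have hint1 : IntegrableOn g1 Q := bdd_int g1 K1 hmeas1 hg1bd
  have hint2 : IntegrableOn g2 Q := bdd_int g2 (2 * m ^ β * (2 * M)) hmeas2 hg2bd'
  have hint3 : IntegrableOn g3 Q := by
    refine bdd_int g3 (M * ‖x - c₀‖ ^ β * 2) hmeas3 ?_
    intro y hy
    calc |g3 y| = |Ω (x - c₀)| * |‖x - c₀‖ ^ β| * |φ y| := by rw [hg3def]; simp [abs_mul]
      _ ≤ M * ‖x - c₀‖ ^ β * 2 := by
        rw [abs_of_nonneg (Real.rpow_nonneg (norm_nonneg _) _)]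
        have h3 : 0 ≤ M * ‖x - c₀‖ ^ β := by positivity
        exact mul_le_mul (mul_le_mul_of_nonneg_right (hΩbd _ hxc0)
          (Real.rpow_nonneg (norm_nonneg _) _)) (hφ2 y) (abs_nonneg _) h3
  have hdiffmeas : Measurable fun y => |Ω (x - y) - Ω (x - c₀)| := by fun_prop
  have hintdiff : IntegrableOn (fun y => |Ω (x - y) - Ω (x - c₀)|) Q := by
    refine bdd_int _ (2 * M) hdiffmeas ?_
    intro y hy
    rw [abs_abs]
    calc |Ω (x - y) - Ω (x - c₀)| ≤ |Ω (x - y)| + |Ω (x - c₀)| := abs_sub _ _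
      _ ≤ 2 * M := by linarith [hΩbd _ (hxy0 y hy), hΩbd _ hxc0]
  set I : ℝ := ∫ y in Q, |Ω (x - y) - Ω (x - c₀)| with hIdef
  have hInn : 0 ≤ I := setIntegral_nonneg hQm fun y _ => abs_nonneg _
  -- integral splitting
  have hI3 : ∫ y in Q, g3 y = 0 := by
    rw [hg3def]
    rw [integral_const_mul]
    rw [hintQ, mul_zero]
  have hIsplit : ∫ y in Q, Ω (x - y) * ‖x - y‖ ^ β * φ y =
      (∫ y in Q, g1 y) + (∫ y in Q, g2 y) := by
    have : ∫ y in Q, Ω (x - y) * ‖x - y‖ ^ β * φ y = ∫ y in Q, (g1 y + g2 y + g3 y) := by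
      refine integral_congr_ae (ae_of_all _ fun y => hsplit y)
    have hadd12 : IntegrableOn (fun y => g1 y + g2 y) Q := hint1.add hint2
    rw [this, integral_add hadd12 hint3, integral_add hint1 hint2, hI3, add_zero]
  -- bound piece 1
  have hI1 : |∫ y in Q, g1 y| ≤ K1 * ρ ^ n := by
    have := norm_setIntegral_le_of_norm_le_const_ae' (f := g1) hQfin
      (ae_of_all _ fun y hy => by simpa [Real.norm_eq_abs] using hg1bd y hy)
    rw [Real.norm_eq_abs, measureReal_def, hQtoReal] at this
    exact this
  -- bound piece 2
  have hI2 : |∫ y in Q, g2 y| ≤ 2 * m ^ β * I := by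
    have h1 : |∫ y in Q, g2 y| ≤ ∫ y in Q, |g2 y| := by
      simpa [Real.norm_eq_abs] using norm_integral_le_integral_norm (μ := volume.restrict Q) g2
    refine h1.trans ?_
    have h2 : ∫ y in Q, |g2 y| ≤ ∫ y in Q, 2 * m ^ β * |Ω (x - y) - Ω (x - c₀)| := by
      refine setIntegral_mono_on hint2.abs (hintdiff.const_mul _) hQm hg2bd
    refine h2.trans ?_
    rw [integral_const_mul]
  -- rpow algebra
  have e1 : ρ ^ α = ρ ^ (β - 1) * ρ * ρ ^ n := by
    rw [show α = (β - 1) + 1 + (n : ℝ) by rw [hβdef]; ring, Real.rpow_add hρ, Real.rpow_add hρ,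
      Real.rpow_one, Real.rpow_natCast]
  have e2 : ‖h‖ ^ (β - 1) = ‖h‖ ^ β * ‖h‖⁻¹ := by
    rw [Real.rpow_sub hhpos, Real.rpow_one, div_eq_mul_inv]
  have hm_pow : ∀ c : ℝ, m ^ c = (3 / 4 : ℝ) ^ c * (ρ ^ c * ‖h‖ ^ c) := by
    intro c
    rw [hmdef, Real.mul_rpow (by norm_num) (by positivity), Real.mul_rpow hρ.le (norm_nonneg _)]
  -- constants
  have hpow_le : ∀ c : ℝ, c ≤ (n : ℝ) + 1 → (3 / 4 : ℝ) ^ (-c) ≤ (4 / 3 : ℝ) ^ (n + 1) := by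
    intro c hc
    have h34 : (3 / 4 : ℝ) ^ (-c) = (4 / 3 : ℝ) ^ c := by
      rw [show (3 / 4 : ℝ) = (4 / 3 : ℝ)⁻¹ by norm_num,
        Real.inv_rpow (by norm_num), ← Real.rpow_neg (by norm_num), neg_neg]
    rw [h34, ← Real.rpow_natCast (4 / 3 : ℝ) (n + 1)]
    refine Real.rpow_le_rpow_of_exponent_le (by norm_num) ?_
    push_cast
    linarith
  have hc1 : M * ((n : ℝ) - α) * s * (3 / 4 : ℝ) ^ (β - 1) ≤ C := by
    have hp : (3 / 4 : ℝ) ^ (β - 1) ≤ (4 / 3 : ℝ) ^ (n + 1) := by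
      rw [show β - 1 = -(1 - β) by ring]
      refine hpow_le _ ?_
      rw [hβdef]; linarith
    rw [hCdef]
    have h1 : M * ((n : ℝ) - α) * s ≤ (M + 2) * ((n : ℝ) + 1) * s := by
      have t1 : M * ((n : ℝ) - α) ≤ M * ((n : ℝ) + 1) :=
        mul_le_mul_of_nonneg_left (by linarith) hM
      have t2 : M * ((n : ℝ) + 1) ≤ (M + 2) * ((n : ℝ) + 1) :=
        mul_le_mul_of_nonneg_right (by linarith) (by positivity)
      exact mul_le_mul_of_nonneg_right (t1.trans t2) hs0.le
    have h2 : 0 ≤ M * ((n : ℝ) - α) * s := by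
      have : (0:ℝ) ≤ (n : ℝ) - α := by linarith
      positivity
    calc M * ((n : ℝ) - α) * s * (3 / 4 : ℝ) ^ (β - 1)
        ≤ M * ((n : ℝ) - α) * s * (4 / 3 : ℝ) ^ (n + 1) :=
          mul_le_mul_of_nonneg_left hp h2
      _ ≤ (M + 2) * ((n : ℝ) + 1) * s * (4 / 3 : ℝ) ^ (n + 1) :=
          mul_le_mul_of_nonneg_right h1 (by positivity)
  have hc2 : 2 * (3 / 4 : ℝ) ^ β ≤ C := by
    have hp : (3 / 4 : ℝ) ^ β ≤ (4 / 3 : ℝ) ^ (n + 1) := by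
      rw [show β = -(-β) by ring]
      refine hpow_le _ ?_
      rw [hβdef]; push_cast; linarith
    rw [hCdef]
    have h1 : (2:ℝ) ≤ (M + 2) * ((n : ℝ) + 1) * s := by
      have hn1 : (1:ℝ) ≤ (n:ℝ) + 1 := by
        have := Nat.cast_nonneg (α := ℝ) n
        linarith
      calc (2:ℝ) = 2 * 1 * 1 := by ring
        _ ≤ (M + 2) * ((n : ℝ) + 1) * s :=
            mul_le_mul (mul_le_mul (by linarith) hn1 one_pos.le (by linarith)) hs1 one_pos.le
              (by positivity)
    calc 2 * (3 / 4 : ℝ) ^ β ≤ 2 * (4 / 3 : ℝ) ^ (n + 1) :=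
          mul_le_mul_of_nonneg_left hp (by norm_num)
      _ ≤ (M + 2) * ((n : ℝ) + 1) * s * (4 / 3 : ℝ) ^ (n + 1) :=
          mul_le_mul_of_nonneg_right h1 (by positivity)
  -- assemble piece 1
  have hA : K1 * ρ ^ n = M * ((n : ℝ) - α) * s * (3 / 4 : ℝ) ^ (β - 1) *
      (ρ ^ α * (‖h‖ ^ β * ‖h‖⁻¹)) := by
    rw [hK1def, hm_pow (β - 1), e1, e2]
    ring
  have hB : 2 * m ^ β = 2 * (3 / 4 : ℝ) ^ β * (ρ ^ α * ρ ^ (-(n : ℝ)) * ‖h‖ ^ β) := by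
    rw [hm_pow β, show ρ ^ α * ρ ^ (-(n : ℝ)) = ρ ^ β by
      rw [← Real.rpow_add hρ, hβdef]; ring_nf]
    ring
  -- final estimate
  have hfinal1 : |∫ y in Q, g1 y| ≤ C * ρ ^ α * ‖h‖ ^ β * ‖h‖⁻¹ := by
    refine hI1.trans ?_
    rw [hA]
    have hnn : 0 ≤ ρ ^ α * (‖h‖ ^ β * ‖h‖⁻¹) := by positivity
    calc M * ((n : ℝ) - α) * s * (3 / 4 : ℝ) ^ (β - 1) * (ρ ^ α * (‖h‖ ^ β * ‖h‖⁻¹))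
        ≤ C * (ρ ^ α * (‖h‖ ^ β * ‖h‖⁻¹)) := mul_le_mul_of_nonneg_right hc1 hnn
      _ = C * ρ ^ α * ‖h‖ ^ β * ‖h‖⁻¹ := by ring
  have hfinal2 : |∫ y in Q, g2 y| ≤ C * ρ ^ α * ‖h‖ ^ β * (ρ ^ (-(n : ℝ)) * I) := by
    refine hI2.trans ?_
    rw [hB]
    have hnn : 0 ≤ ρ ^ α * ρ ^ (-(n : ℝ)) * ‖h‖ ^ β * I := by positivity
    calc 2 * (3 / 4 : ℝ) ^ β * (ρ ^ α * ρ ^ (-(n : ℝ)) * ‖h‖ ^ β) * I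
        ≤ C * (ρ ^ α * ρ ^ (-(n : ℝ)) * ‖h‖ ^ β) * I := by
          have := mul_le_mul_of_nonneg_right
            (mul_le_mul_of_nonneg_right hc2 (by positivity : 0 ≤ ρ ^ α * ρ ^ (-(n : ℝ)) * ‖h‖ ^ β))
            hInn
          linarith [this]
      _ = C * ρ ^ α * ‖h‖ ^ β * (ρ ^ (-(n : ℝ)) * I) := by ring
  calc |∫ y in Q, Ω (x - y) * ‖x - y‖ ^ β * φ y|
      = |(∫ y in Q, g1 y) + (∫ y in Q, g2 y)| := by rw [hIsplit]
    _ ≤ |∫ y in Q, g1 y| + |∫ y in Q, g2 y| := abs_add_le _ _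
    _ ≤ C * ρ ^ α * ‖h‖ ^ β * ‖h‖⁻¹ + C * ρ ^ α * ‖h‖ ^ β * (ρ ^ (-(n : ℝ)) * I) :=
        add_le_add hfinal1 hfinal2
    _ = C * ρ ^ α * ‖h‖ ^ β * (‖h‖⁻¹ + ρ ^ (-(n : ℝ)) * I) := by ring
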